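/- arXiv:2411.04447 — 3 statements merged into one kernel-verified Lean document; each statement's English description precedes it below -/
import Mathlib

section
/- Let m be an integer and let s be an integer with 0 ≤ s ≤ m−2 such that m+s is even and m+s ≥ 6, and let f : F_q → F_2 (q = 2^m) be an s-plateaued Boolean function with f(0) = 0. Then the binary code C̄_f is self-orthogonal (C̄_f ⊆ C̄_f^⊥), and its dual C̄_f^⊥ has length 2^m, dimension 2^m − m − 2, and minimum distance exactly 4. -/
open Finset

noncomputable section

/-- ζ_p = exp(2πi/p). -/
def zetaP (p : ℕ) : ℂ := Complex.exp (2 * Real.pi * Complex.I / p)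

/-- ζ_p^a for a ∈ F_p. -/
def eChar (p : ℕ) (a : ZMod p) : ℂ := zetaP p ^ a.val

/-- Walsh transform of f : F_q → F_p : W_f(β) = Σ_x ζ_p^{f(x) − Tr(βx)}. -/
def walsh (p : ℕ) (F : Type) [Field F] [Fintype F] [Algebra (ZMod p) F]
    (f : F → ZMod p) (β : F) : ℂ :=
  ∑ x : F, eChar p (f x - Algebra.trace (ZMod p) F (β * x))

/-- √p* = √p if p ≡ 1 (mod 4), and i√p if p ≡ 3 (mod 4). -/
def sqrtPStar (p : ℕ) : ℂ :=
  if p % 4 = 1 then ((Real.sqrt p : ℝ) : ℂ) else Complex.I * ((Real.sqrt p : ℝ) : ℂ)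

/-- f is s-plateaued: |W_f(β)|² ∈ {0, p^{m+s}} for all β. -/
def IsPlateaued (p m s : ℕ) (F : Type) [Field F] [Fintype F] [Algebra (ZMod p) F]
    (f : F → ZMod p) : Prop :=
  ∀ β : F, Complex.normSq (walsh p F f β) = 0 ∨
    Complex.normSq (walsh p F f β) = (p : ℝ) ^ (m + s)

/-- Walsh support S_f = {β : |W_f(β)|² = p^{m+s}}. -/
def walshSupp (p m s : ℕ) (F : Type) [Field F] [Fintype F] [Algebra (ZMod p) F]
    (f : F → ZMod p) : Set F :=
  {β : F | Complex.normSq (walsh p F f β) = (p : ℝ) ^ (m + s)}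

/-- f is weakly regular s-plateaued with sign ε and dual function f^*. -/
def IsWeaklyRegularPlateaued (p m s : ℕ) (F : Type) [Field F] [Fintype F]
    [Algebra (ZMod p) F] (f : F → ZMod p) (ε : ℤ) (fstar : F → ZMod p) : Prop :=
  IsPlateaued p m s F f ∧ (ε = 1 ∨ ε = -1) ∧
  (∀ β : F, β ∉ walshSupp p m s F f → fstar β = 0) ∧
  (∀ β ∈ walshSupp p m s F f,
    walsh p F f β = (ε : ℂ) * sqrtPStar p ^ (m + s) * eChar p (fstar β))

/-- Walsh transform of a Boolean function, with values in ℤ. -/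
def walsh2 (F : Type) [Field F] [Fintype F] [Algebra (ZMod 2) F]
    (f : F → ZMod 2) (β : F) : ℤ :=
  ∑ x : F, (-1 : ℤ) ^ ((f x + Algebra.trace (ZMod 2) F (β * x)).val)

/-- A Boolean function is s-plateaued: W_f(β)² ∈ {0, 2^{m+s}} for all β. -/
def IsPlateaued2 (m s : ℕ) (F : Type) [Field F] [Fintype F] [Algebra (ZMod 2) F]
    (f : F → ZMod 2) : Prop :=
  ∀ β : F, walsh2 F f β ^ 2 = 0 ∨ walsh2 F f β ^ 2 = 2 ^ (m + s)

/-- Hamming weight. -/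
def wtH {n : Type} [Fintype n] {K : Type} [Zero K] [DecidableEq K] (v : n → K) : ℕ :=
  (Finset.univ.filter (fun i => v i ≠ 0)).card

/-- A code S has minimum distance d. -/
def hasMinDist {n : Type} [Fintype n] {K : Type} [Zero K] [DecidableEq K]
    (S : Set (n → K)) (d : ℕ) : Prop :=
  (∃ v ∈ S, v ≠ 0 ∧ wtH v = d) ∧ ∀ v ∈ S, v ≠ 0 → d ≤ wtH v

/-- The dual code of a set of vectors. -/
def dualCode {n : Type} [Fintype n] {K : Type} [Field K] (S : Set (n → K)) :
    Submodule K (n → K) where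
  carrier := {u : n → K | ∀ v ∈ S, ∑ i, u i * v i = 0}
  add_mem' := by
    intro u w hu hw v hv
    have h1 := hu v hv
    have h2 := hw v hv
    simp only [Pi.add_apply, add_mul, Finset.sum_add_distrib, h1, h2, add_zero]
  zero_mem' := by
    intro v hv
    simp
  smul_mem' := by
    intro c u hu v hv
    have h1 := hu v hv
    simp only [Pi.smul_apply, smul_eq_mul, mul_assoc, ← Finset.mul_sum, h1, mul_zero]

/-- The code C̄_f = {(a f(x) + Tr(bx) + c)_{x ∈ F_q}}. -/
def codeCbar (p : ℕ) (F : Type) [Field F] [Fintype F] [Algebra (ZMod p) F]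
    (f : F → ZMod p) : Set (F → ZMod p) :=
  {v : F → ZMod p | ∃ a c : ZMod p, ∃ b : F,
    v = fun x => a * f x + Algebra.trace (ZMod p) F (b * x) + c}

/-- The extended code C̄_f' ⊆ F_p^{m+2+q}: all vectors
(c, a, a_0, …, a_{m−1}, (a f(x) + Tr(bx) + a + c)_{x ∈ F_q}) with b = Σ a_i α^i. -/
def extCode (p m : ℕ) (F : Type) [Field F] [Fintype F] [Algebra (ZMod p) F]
    (f : F → ZMod p) (α : F) : Set (Fin (m + 2) ⊕ F → ZMod p) :=
  {v | ∃ c a : ZMod p, ∃ aa : Fin m → ZMod p,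
    v = Sum.elim (Fin.cons c (Fin.cons a aa))
      (fun x => a * f x +
        Algebra.trace (ZMod p) F ((∑ i : Fin m, aa i • α ^ (i : ℕ)) * x) + a + c)}

/-- The punctured code C_f^* indexed by the nonzero elements of F_q. -/
def codeCstar (p : ℕ) (F : Type) [Field F] [Fintype F] [Algebra (ZMod p) F]
    (f : F → ZMod p) : Set ({x : F // x ≠ 0} → ZMod p) :=
  {v | ∃ a : ZMod p, ∃ b : F,
    v = fun x => a * f x.val + Algebra.trace (ZMod p) F (b * x.val)}

end

set_option linter.unusedSectionVars false
section Aux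
variable {F : Type} [Field F] [Fintype F] [Algebra (ZMod 2) F]

lemma zcases (a : ZMod 2) : a = 0 ∨ a = 1 := by revert a; decide

lemma zne {a : ZMod 2} (h : a ≠ 0) : a = 1 := by revert a; decide

lemma pow_val_add_one (u : ZMod 2) : (-1:ℤ)^((u+1).val) = -(-1:ℤ)^u.val := by revert u; decide

lemma pow_val_ind (u : ZMod 2) : (-1:ℤ)^u.val = 1 - 2 * (if u ≠ 0 then 1 else 0) := by
  revert u; decide

lemma trace_nondeg (β : F) (hβ : β ≠ 0) :
    ∃ x : F, Algebra.trace (ZMod 2) F (β * x) ≠ 0 := by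
  have hnd := traceForm_nondegenerate (ZMod 2) F
  by_contra hf
  push_neg at hf
  exact hβ (hnd.1 β (fun y => by simpa [Algebra.traceForm_apply] using hf y))

lemma charSum_eq_zero {b : F} (hb : b ≠ 0) :
    ∑ x : F, (-1:ℤ)^((Algebra.trace (ZMod 2) F (b*x)).val) = 0 := by
  obtain ⟨y, hy⟩ := trace_nondeg b hb
  have hy1 : Algebra.trace (ZMod 2) F (b*y) = 1 := zne hy
  have h2 : ∑ x : F, (-1:ℤ)^((Algebra.trace (ZMod 2) F (b*(x+y))).val)
      = ∑ x : F, (-1:ℤ)^((Algebra.trace (ZMod 2) F (b*x)).val) :=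
    Fintype.sum_equiv (Equiv.addRight y) _ _ (fun x => rfl)
  have h3 : ∀ x : F, (-1:ℤ)^((Algebra.trace (ZMod 2) F (b*(x+y))).val)
      = -(-1:ℤ)^((Algebra.trace (ZMod 2) F (b*x)).val) := by
    intro x
    rw [mul_add, map_add, hy1, pow_val_add_one]
  rw [Finset.sum_congr rfl (fun x _ => h3 x), Finset.sum_neg_distrib] at h2
  linarith
lemma wt_eq_sum_ite (g : F → ZMod 2) :
    (wtH g : ℤ) = ∑ x : F, (if g x ≠ 0 then (1:ℤ) else 0) := by
  rw [Finset.sum_boole, wtH]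

lemma two_mul_wtH (g : F → ZMod 2) :
    2 * (wtH g : ℤ) = (Fintype.card F : ℤ) - ∑ x : F, (-1:ℤ)^((g x).val) := by
  rw [Finset.sum_congr rfl (fun x _ => pow_val_ind (g x)), Finset.sum_sub_distrib,
    Finset.sum_const, ← Finset.mul_sum, ← wt_eq_sum_ite]
  simp only [Finset.card_univ, nsmul_eq_mul, mul_one]
  ring

lemma sum_eq_wt (g : F → ZMod 2) : ∑ x : F, g x = (wtH g : ZMod 2) := by
  rw [wtH, ← Finset.sum_filter_ne_zero Finset.univ]
  rw [Finset.sum_congr rfl (fun x hx => zne (Finset.mem_filter.mp hx).2)]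
  simp

lemma walsh_dvd (m s : ℕ) (hpar : Even (m+s)) (hms : 6 ≤ m+s) (f : F → ZMod 2)
    (hpl : IsPlateaued2 m s F f) (β : F) : (8:ℤ) ∣ walsh2 F f β := by
  obtain ⟨h, hh⟩ := hpar
  rcases hpl β with h0 | h1
  · rw [pow_eq_zero_iff (by norm_num)] at h0
    simp [h0]
  · have hsq : ((2:ℤ)^h)^2 = 2^(m+s) := by rw [hh]; ring
    have hz : (walsh2 F f β - 2^h) * (walsh2 F f β + 2^h) = 0 := by
      have := h1
      nlinarith [hsq, h1]
    have h8 : (8:ℤ) ∣ 2^h := by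
      have h38 : (8:ℤ) = 2^3 := by norm_num
      rw [h38]; exact pow_dvd_pow 2 (by omega)
    rcases mul_eq_zero.mp hz with h2 | h2
    · have hw : walsh2 F f β = 2^h := by linarith
      rw [hw]; exact h8
    · have hw : walsh2 F f β = -(2^h) := by linarith
      rw [hw]; exact dvd_neg.mpr h8

lemma trSum_card {b : F} (hb : b = 0) :
    ∑ x : F, (-1:ℤ)^((Algebra.trace (ZMod 2) F (b*x)).val) = (Fintype.card F : ℤ) := by
  subst hb
  simp

lemma wt_div4 (m s : ℕ) (hs : s ≤ m - 2) (hpar : Even (m+s)) (hms : 6 ≤ m+s)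
    (hcard : Fintype.card F = 2 ^ m) (f : F → ZMod 2)
    (hpl : IsPlateaued2 m s F f) {u : F → ZMod 2} (hu : u ∈ codeCbar 2 F f) :
    4 ∣ wtH u := by
  obtain ⟨a, c, b, rfl⟩ := hu
  have hm4 : 4 ≤ m := by omega
  have hq8 : (8:ℤ) ∣ (Fintype.card F : ℤ) := by
    rw [hcard]
    push_cast
    have h38 : (8:ℤ) = 2^3 := by norm_num
    rw [h38]; exact pow_dvd_pow 2 (by omega)
  have key := two_mul_wtH (F := F) (fun x => a * f x + Algebra.trace (ZMod 2) F (b * x) + c)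
  have hdvd : (8:ℤ) ∣ (Fintype.card F : ℤ)
      - ∑ x : F, (-1:ℤ)^((a * f x + Algebra.trace (ZMod 2) F (b * x) + c).val) := by
    rcases zcases a with ha | ha
    · subst ha
      rcases zcases c with hc | hc
      · subst hc
        simp only [zero_mul, zero_add, add_zero]
        by_cases hb : b = 0
        · rw [trSum_card hb]; simp
        · rw [charSum_eq_zero hb]; simpa using hq8
      · subst hc
        simp only [zero_mul, zero_add]
        rw [Finset.sum_congr rfl
          (fun x _ => pow_val_add_one (Algebra.trace (ZMod 2) F (b * x))),
          Finset.sum_neg_distrib]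
        by_cases hb : b = 0
        · rw [trSum_card hb]
          rw [sub_neg_eq_add]
          exact Dvd.dvd.add hq8 hq8
        · rw [charSum_eq_zero hb]; simpa using hq8
    · subst ha
      have hW := walsh_dvd m s hpar hms f hpl b
      rcases zcases c with hc | hc
      · subst hc
        simp only [one_mul, add_zero]
        exact dvd_sub hq8 hW
      · subst hc
        simp only [one_mul]
        rw [Finset.sum_congr rfl
          (fun x _ => pow_val_add_one (f x + Algebra.trace (ZMod 2) F (b * x))),
          Finset.sum_neg_distrib, sub_neg_eq_add]
        exact Dvd.dvd.add hq8 hW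
  rw [← key] at hdvd
  obtain ⟨k, hk⟩ := hdvd
  have : ((4:ℕ):ℤ) ∣ ((wtH fun x => a * f x + Algebra.trace (ZMod 2) F (b * x) + c : ℕ):ℤ) :=
    ⟨k, by push_cast at hk ⊢; linarith⟩
  exact_mod_cast this

lemma code_add {f v w : F → ZMod 2} (hv : v ∈ codeCbar 2 F f) (hw : w ∈ codeCbar 2 F f) :
    v + w ∈ codeCbar 2 F f := by
  obtain ⟨a, c, b, rfl⟩ := hv
  obtain ⟨a', c', b', rfl⟩ := hw
  refine ⟨a + a', c + c', b + b', ?_⟩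
  funext x
  simp only [Pi.add_apply, add_mul, map_add]
  ring

lemma ind2_identity (u t : ZMod 2) :
    2 * (if u * t ≠ 0 then (1:ℤ) else 0)
      = (if u ≠ 0 then (1:ℤ) else 0) + (if t ≠ 0 then (1:ℤ) else 0)
        - (if u + t ≠ 0 then (1:ℤ) else 0) := by
  revert u t; decide

lemma sum_prod_zero (m s : ℕ) (hs : s ≤ m - 2) (hpar : Even (m+s)) (hms : 6 ≤ m+s)
    (hcard : Fintype.card F = 2 ^ m) (f : F → ZMod 2)
    (hpl : IsPlateaued2 m s F f) {v w : F → ZMod 2}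
    (hv : v ∈ codeCbar 2 F f) (hw : w ∈ codeCbar 2 F f) :
    ∑ x : F, v x * w x = 0 := by
  have hkey : 2 * (wtH (fun x => v x * w x) : ℤ)
      = (wtH v : ℤ) + (wtH w : ℤ) - (wtH (v + w) : ℤ) := by
    calc 2 * (wtH (fun x => v x * w x) : ℤ)
        = ∑ x : F, 2 * (if v x * w x ≠ 0 then (1:ℤ) else 0) := by
          rw [wt_eq_sum_ite, Finset.mul_sum]
      _ = ∑ x : F, ((if v x ≠ 0 then (1:ℤ) else 0) + (if w x ≠ 0 then (1:ℤ) else 0)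
            - (if v x + w x ≠ 0 then (1:ℤ) else 0)) :=
          Finset.sum_congr rfl (fun x _ => ind2_identity (v x) (w x))
      _ = (wtH v : ℤ) + (wtH w : ℤ) - (wtH (v + w) : ℤ) := by
          rw [Finset.sum_sub_distrib, Finset.sum_add_distrib, wt_eq_sum_ite, wt_eq_sum_ite,
            wt_eq_sum_ite]
          simp
  have h4v := wt_div4 m s hs hpar hms hcard f hpl hv
  have h4w := wt_div4 m s hs hpar hms hcard f hpl hw
  have h4vw := wt_div4 m s hs hpar hms hcard f hpl (code_add hv hw)
  have h2 : 2 ∣ wtH (fun x => v x * w x) := by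
    obtain ⟨k1, e1⟩ := h4v; obtain ⟨k2, e2⟩ := h4w; obtain ⟨k3, e3⟩ := h4vw
    have : ((2:ℕ):ℤ) ∣ ((wtH (fun x => v x * w x) : ℕ) : ℤ) := by
      refine ⟨(k1:ℤ) + k2 - k3, ?_⟩
      rw [e1, e2, e3] at hkey
      push_cast at hkey ⊢
      omega
    exact_mod_cast this
  rw [sum_eq_wt]
  obtain ⟨k, hk⟩ := h2
  rw [hk]
  push_cast
  rw [show ((2:ZMod 2)) = 0 by decide]
  ring

noncomputable def Phi (f : F → ZMod 2) : (ZMod 2 × ZMod 2 × F) →ₗ[ZMod 2] (F → ZMod 2) where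
  toFun p := fun x => p.1 * f x + Algebra.trace (ZMod 2) F (p.2.2 * x) + p.2.1
  map_add' p q := by
    funext x
    simp only [Prod.fst_add, Prod.snd_add, Pi.add_apply, add_mul, map_add]
    ring
  map_smul' r p := by
    funext x
    simp only [Prod.smul_fst, Prod.smul_snd, Pi.smul_apply, smul_eq_mul, RingHom.id_apply,
      smul_mul_assoc, map_smul]
    ring

lemma code_eq_range (f : F → ZMod 2) :
    codeCbar 2 F f = ↑(LinearMap.range (Phi (F := F) f)) := by
  ext v
  simp only [SetLike.mem_coe, LinearMap.mem_range]
  constructor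
  · rintro ⟨a, c, b, rfl⟩; exact ⟨(a, c, b), rfl⟩
  · rintro ⟨⟨a, c, b⟩, rfl⟩; exact ⟨a, c, b, rfl⟩

noncomputable def dotB : LinearMap.BilinForm (ZMod 2) (F → ZMod 2) :=
  LinearMap.mk₂ (ZMod 2) (fun u v => ∑ x : F, u x * v x)
    (fun u u' v => by simp [add_mul, Finset.sum_add_distrib])
    (fun r u v => by simp [Finset.mul_sum, smul_eq_mul, mul_assoc])
    (fun u v v' => by simp [mul_add, Finset.sum_add_distrib])
    (fun r u v => by simp [Finset.mul_sum, smul_eq_mul, mul_left_comm])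

lemma dotB_apply (u v : F → ZMod 2) : dotB u v = ∑ x : F, u x * v x := rfl

lemma dotB_refl : (dotB (F := F)).IsRefl := by
  intro u v h
  rw [dotB_apply] at h ⊢
  rw [Finset.sum_congr rfl (fun x _ => mul_comm (v x) (u x))]
  exact h

lemma dotB_nondeg : (dotB (F := F)).Nondegenerate := by
  classical
  refine ⟨fun u h => ?_, fun u h => ?_⟩
  · funext x
    have hx := h (Pi.single x 1)
    rw [dotB_apply] at hx
    simpa [Pi.single_apply, mul_ite] using hx
  · funext x
    have hx := h (Pi.single x 1)
    rw [dotB_apply] at hx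
    simpa [Pi.single_apply, ite_mul] using hx

lemma mem_dualCode {S : Set (F → ZMod 2)} {u : F → ZMod 2} :
    u ∈ dualCode S ↔ ∀ v ∈ S, ∑ i : F, u i * v i = 0 := Iff.rfl

lemma dual_eq_orth (f : F → ZMod 2) :
    dualCode (codeCbar 2 F f)
      = (dotB (F := F)).orthogonal (LinearMap.range (Phi (F := F) f)) := by
  ext u
  rw [mem_dualCode, LinearMap.BilinForm.mem_orthogonal_iff]
  constructor
  · intro hu n hn
    have h1 := hu n (by rw [code_eq_range]; exact SetLike.mem_coe.mpr hn)
    rw [dotB_apply]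
    rw [Finset.sum_congr rfl (fun x _ => mul_comm (n x) (u x))]
    exact h1
  · intro hu v hv
    rw [code_eq_range] at hv
    have h1 := hu v (SetLike.mem_coe.mp hv)
    rw [dotB_apply] at h1
    rw [Finset.sum_congr rfl (fun x _ => mul_comm (u x) (v x))]
    exact h1

lemma phi_injective (m s : ℕ) (hs : s ≤ m - 2) (hms : 6 ≤ m+s)
    (hcard : Fintype.card F = 2 ^ m) (f : F → ZMod 2) (hf0 : f 0 = 0)
    (hpl : IsPlateaued2 m s F f) :
    LinearMap.ker (Phi (F := F) f) = ⊥ := by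
  rw [LinearMap.ker_eq_bot']
  rintro ⟨a, c, b⟩ hp
  have hap : ∀ x : F, a * f x + Algebra.trace (ZMod 2) F (b * x) + c = 0 :=
    fun x => congr_fun hp x
  have hc : c = 0 := by
    have h0 := hap 0
    rw [hf0, mul_zero, mul_zero, map_zero] at h0
    simpa using h0
  subst hc
  rcases zcases a with ha | ha
  · subst ha
    have hb : b = 0 := by
      by_contra hb
      obtain ⟨x, hx⟩ := trace_nondeg b hb
      have := hap x
      rw [zero_mul, zero_add, add_zero] at this
      exact hx this
    subst hb
    rfl
  · subst ha
    exfalso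
    have hval : ∀ x : F, f x + Algebra.trace (ZMod 2) F (b * x) = 0 := by
      intro x
      have := hap x
      rwa [one_mul, add_zero] at this
    have hw : walsh2 F f b = (Fintype.card F : ℤ) := by
      unfold walsh2
      rw [Finset.sum_congr rfl (fun x _ => by rw [hval x, ZMod.val_zero, pow_zero])]
      simp
    rcases hpl b with h0 | h1
    · rw [hw] at h0
      have : (0:ℤ) < (Fintype.card F : ℤ)^2 := by positivity
      omega
    · rw [hw, hcard] at h1
      have h2 : ((2:ℤ)^m)^2 = (2:ℤ)^(m+s) := by push_cast at h1; exact h1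
      have h3 : (2:ℤ)^(2*m) = (2:ℤ)^(m+s) := by rw [← h2]; ring
      have h4 : (2:ℕ)^(2*m) = (2:ℕ)^(m+s) := by exact_mod_cast h3
      have h5 := Nat.pow_right_injective (le_refl 2) h4
      omega

lemma finrank_dual (m s : ℕ) (hs : s ≤ m - 2) (hms : 6 ≤ m+s)
    (hcard : Fintype.card F = 2 ^ m) (f : F → ZMod 2) (hf0 : f 0 = 0)
    (hpl : IsPlateaued2 m s F f) :
    Module.finrank (ZMod 2) (dualCode (codeCbar 2 F f)) = 2^m - m - 2 := by
  have hm4 : 4 ≤ m := by omega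
  have hFm : Module.finrank (ZMod 2) F = m := by
    have h := Module.card_eq_pow_finrank (K := ZMod 2) (V := F)
    rw [ZMod.card, hcard] at h
    exact (Nat.pow_right_injective (le_refl 2) h.symm)
  have hV : Module.finrank (ZMod 2) (F → ZMod 2) = 2^m := by
    rw [Module.finrank_pi, hcard]
  have hW : Module.finrank (ZMod 2) (LinearMap.range (Phi (F := F) f)) = m + 2 := by
    rw [LinearMap.finrank_range_of_inj
      (LinearMap.ker_eq_bot.mp (phi_injective m s hs hms hcard f hf0 hpl))]
    rw [Module.finrank_prod, Module.finrank_prod, Module.finrank_self, hFm]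
    omega
  rw [dual_eq_orth]
  rw [LinearMap.BilinForm.finrank_orthogonal dotB_nondeg, hV, hW]
  omega

lemma two_eq_zero_F : (1:F) + 1 = 0 := by
  have h : ((1:ZMod 2) + 1) = 0 := by decide
  have h2 := map_add (algebraMap (ZMod 2) F) 1 1
  rw [h, map_zero, map_one] at h2
  exact h2.symm

lemma add_self_F (x : F) : x + x = 0 := by
  have h := two_eq_zero_F (F := F)
  linear_combination x * h

lemma eq_of_add_eq_zero_F {x y : F} (h : x + y = 0) : x = y := by
  have h2 := two_eq_zero_F (F := F)
  linear_combination h - y * h2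

lemma dual_min_dist_lb (f : F → ZMod 2) (hf0 : f 0 = 0)
    {v : F → ZMod 2} (hv : v ∈ dualCode (codeCbar 2 F f)) (hv0 : v ≠ 0) :
    4 ≤ wtH v := by
  classical
  rw [mem_dualCode] at hv
  have hone : (fun _ : F => (1:ZMod 2)) ∈ codeCbar 2 F f :=
    ⟨0, 1, 0, by funext x; simp⟩
  have hpar : ∑ x : F, v x = 0 := by
    have h := hv _ hone; simpa using h
  rw [sum_eq_wt] at hpar
  have h2 : 2 ∣ wtH v := by
    have h := (ZMod.natCast_eq_zero_iff _ 2).mp hpar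
    exact h
  have h1 : 1 ≤ wtH v := by
    rcases Nat.eq_zero_or_pos (wtH v) with h | h
    · exfalso; apply hv0; funext x
      have hemp : (Finset.univ.filter (fun i => v i ≠ 0)) = ∅ := Finset.card_eq_zero.mp h
      by_contra hx
      have hmem : x ∈ (∅ : Finset F) :=
        hemp ▸ Finset.mem_filter.mpr ⟨Finset.mem_univ x, hx⟩
      simp at hmem
    · exact h
  by_contra hlt
  push_neg at hlt
  have hw2 : (Finset.univ.filter (fun i => v i ≠ 0)).card = 2 := by
    have : wtH v = 2 := by omega
    rw [wtH] at this; exact this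
  obtain ⟨x, y, hxy, hT⟩ := Finset.card_eq_two.mp hw2
  have hvx : v x = 1 := by
    apply zne
    have : x ∈ Finset.univ.filter (fun i => v i ≠ 0) := by
      rw [hT]; exact Finset.mem_insert_self x {y}
    exact (Finset.mem_filter.mp this).2
  have hvy : v y = 1 := by
    apply zne
    have : y ∈ Finset.univ.filter (fun i => v i ≠ 0) := by
      rw [hT]; simp
    exact (Finset.mem_filter.mp this).2
  have htr : ∀ b : F, (fun z => Algebra.trace (ZMod 2) F (b * z)) ∈ codeCbar 2 F f :=
    fun b => ⟨0, 0, b, by funext z; simp⟩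
  have hb : ∀ b : F, Algebra.trace (ZMod 2) F (b * x) + Algebra.trace (ZMod 2) F (b * y) = 0 := by
    intro b
    have h := hv _ (htr b)
    have hsub : ∑ z ∈ Finset.univ.filter (fun i => v i ≠ 0),
        v z * Algebra.trace (ZMod 2) F (b * z)
        = ∑ z : F, v z * Algebra.trace (ZMod 2) F (b * z) := by
      apply Finset.sum_subset (Finset.subset_univ _)
      intro z _ hz
      have : v z = 0 := by
        by_contra hvz
        exact hz (Finset.mem_filter.mpr ⟨Finset.mem_univ z, hvz⟩)
      rw [this, zero_mul]
    rw [h] at hsub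
    rw [hT, Finset.sum_pair hxy, hvx, hvy, one_mul, one_mul] at hsub
    exact hsub
  have hd : x + y ≠ 0 := fun h => hxy (eq_of_add_eq_zero_F h)
  obtain ⟨z, hz⟩ := trace_nondeg (x + y) hd
  apply hz
  have h := hb z
  rw [← map_add, ← mul_add] at h
  rw [mul_comm]
  exact h

lemma nsmul4_zmod2 (c : ZMod 2) : (4:ℕ) • c = 0 := by revert c; decide

lemma exists_wt4 (m : ℕ) (hm4 : 4 ≤ m) (hcard : Fintype.card F = 2 ^ m) (f : F → ZMod 2) :
    ∃ v ∈ dualCode (codeCbar 2 F f), v ≠ 0 ∧ wtH v = 4 := by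
  classical
  set P := Finset.powersetCard 2 (Finset.univ : Finset F) with hPdef
  set t := ((Finset.univ.erase (0:F)) ×ˢ (Finset.univ : Finset (ZMod 2))) with htdef
  set key : Finset F → F × ZMod 2 := fun T => (∑ x ∈ T, x, ∑ x ∈ T, f x) with hkeydef
  have hmaps : ∀ T ∈ P, key T ∈ t := by
    intro T hT
    obtain ⟨x, y, hxy, hTeq⟩ := Finset.card_eq_two.mp (Finset.mem_powersetCard_univ.mp hT)
    rw [Finset.mem_product]
    constructor
    · rw [Finset.mem_erase]
      refine ⟨?_, Finset.mem_univ _⟩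
      rw [hkeydef]
      simp only [hTeq, Finset.sum_pair hxy]
      exact fun h => hxy (eq_of_add_eq_zero_F h)
    · exact Finset.mem_univ _
  have hcards : t.card < P.card := by
    have hPc : P.card = 2^(m-1) * (2^m - 1) := by
      rw [hPdef, Finset.card_powersetCard, Finset.card_univ, hcard, Nat.choose_two_right]
      rw [show (2:ℕ)^m = 2 * 2^(m-1) by rw [← pow_succ']; congr 1; omega]
      rw [mul_assoc, Nat.mul_div_cancel_left _ (by norm_num)]
    have htc : t.card = (2^m - 1) * 2 := by
      rw [htdef, Finset.card_product, Finset.card_erase_of_mem (Finset.mem_univ _),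
        Finset.card_univ, Finset.card_univ, hcard, ZMod.card]
    rw [hPc, htc, mul_comm ((2:ℕ)^m - 1) 2]
    have e1 : (2:ℕ) < 2^(m-1) := by
      calc (2:ℕ) < 2^3 := by norm_num
      _ ≤ 2^(m-1) := Nat.pow_le_pow_right (by norm_num) (by omega)
    have e2 : (0:ℕ) < 2^m - 1 := by
      have : (16:ℕ) ≤ 2^m := by
        calc (16:ℕ) = 2^4 := by norm_num
        _ ≤ 2^m := Nat.pow_le_pow_right (by norm_num) hm4
      omega
    exact mul_lt_mul_of_pos_right e1 e2
  obtain ⟨T₁, hT₁, T₂, hT₂, hne, hkeq⟩ :=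
    Finset.exists_ne_map_eq_of_card_lt_of_maps_to hcards hmaps
  obtain ⟨x, y, hxy, hT1eq⟩ := Finset.card_eq_two.mp (Finset.mem_powersetCard_univ.mp hT₁)
  obtain ⟨z, w, hzw, hT2eq⟩ := Finset.card_eq_two.mp (Finset.mem_powersetCard_univ.mp hT₂)
  have hsum : x + y = z + w := by
    have := congrArg Prod.fst hkeq
    simpa [hkeydef, hT1eq, hT2eq, Finset.sum_pair hxy, Finset.sum_pair hzw] using this
  have hfsum : f x + f y = f z + f w := by
    have := congrArg Prod.snd hkeq
    simpa [hkeydef, hT1eq, hT2eq, Finset.sum_pair hxy, Finset.sum_pair hzw] using this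
  have h1 : x ≠ z := by
    intro h
    apply hne
    have hyw : y = w := by rw [h] at hsum; exact add_left_cancel hsum
    rw [hT1eq, hT2eq, h, hyw]
  have h2 : x ≠ w := by
    intro h
    apply hne
    have hyz : y = z := by linear_combination hsum - h
    rw [hT1eq, hT2eq, h, hyz, Finset.pair_comm]
  have h3 : y ≠ z := by
    intro h
    apply hne
    have hxw : x = w := by linear_combination hsum - h
    rw [hT1eq, hT2eq, h, hxw, Finset.pair_comm]
  have h4 : y ≠ w := by
    intro h
    apply hne
    have hxz : x = z := by rw [h] at hsum; exact add_right_cancel hsum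
    rw [hT1eq, hT2eq, h, hxz]
  have hdisj : Disjoint T₁ T₂ := by
    rw [hT1eq, hT2eq, Finset.disjoint_left]
    intro a ha hb
    simp only [Finset.mem_insert, Finset.mem_singleton] at ha hb
    rcases ha with rfl | rfl <;> rcases hb with rfl | rfl <;>
      first | exact h1 rfl | exact h2 rfl | exact h3 rfl | exact h4 rfl
  set U := T₁ ∪ T₂ with hUdef
  have hUcard : U.card = 4 := by
    rw [hUdef, Finset.card_union_of_disjoint hdisj, hT1eq, hT2eq,
      Finset.card_pair hxy, Finset.card_pair hzw]
  have hUsum : ∑ a ∈ U, a = 0 := by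
    rw [hUdef, Finset.sum_union hdisj, hT1eq, hT2eq, Finset.sum_pair hxy,
      Finset.sum_pair hzw, hsum]
    exact add_self_F _
  have hUf : ∑ a ∈ U, f a = 0 := by
    rw [hUdef, Finset.sum_union hdisj, hT1eq, hT2eq, Finset.sum_pair hxy,
      Finset.sum_pair hzw, hfsum]
    exact add_self_F _
  refine ⟨fun a => if a ∈ U then (1:ZMod 2) else 0, ?_, ?_, ?_⟩
  · rw [mem_dualCode]
    rintro wv ⟨a, c, b, rfl⟩
    have hstep : ∑ i : F, (if i ∈ U then (1:ZMod 2) else 0)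
          * (a * f i + Algebra.trace (ZMod 2) F (b * i) + c)
        = ∑ i ∈ U, (a * f i + Algebra.trace (ZMod 2) F (b * i) + c) := by
      calc ∑ i : F, (if i ∈ U then (1:ZMod 2) else 0)
              * (a * f i + Algebra.trace (ZMod 2) F (b * i) + c)
          = ∑ i : F, (if i ∈ U then a * f i + Algebra.trace (ZMod 2) F (b * i) + c else 0) :=
            Finset.sum_congr rfl (fun i _ => by split_ifs <;> simp)
        _ = ∑ i ∈ Finset.univ ∩ U, (a * f i + Algebra.trace (ZMod 2) F (b * i) + c) :=
            Finset.sum_ite_mem _ _ _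
        _ = ∑ i ∈ U, (a * f i + Algebra.trace (ZMod 2) F (b * i) + c) := by
            rw [Finset.univ_inter]
    rw [hstep, Finset.sum_add_distrib, Finset.sum_add_distrib, ← Finset.mul_sum, hUf,
      mul_zero, ← map_sum, ← Finset.mul_sum, hUsum, mul_zero, map_zero,
      Finset.sum_const, hUcard, nsmul4_zmod2]
    simp
  · intro h0
    have hx : x ∈ U := by
      rw [hUdef, Finset.mem_union, hT1eq]
      exact Or.inl (Finset.mem_insert_self x {y})
    have := congr_fun h0 x
    rw [if_pos hx] at this
    exact one_ne_zero this
  · rw [wtH]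
    have hfil : (Finset.univ.filter (fun i => (if i ∈ U then (1:ZMod 2) else 0) ≠ 0)) = U := by
      ext a
      simp only [Finset.mem_filter, Finset.mem_univ, true_and]
      split_ifs with h
      · simpa using h
      · simpa using h
    rw [hfil, hUcard]

end Aux

theorem statement13 (m s : ℕ) (hs : s ≤ m - 2) (hpar : Even (m + s)) (hms : 6 ≤ m + s)
    (F : Type) [Field F] [Fintype F] [Algebra (ZMod 2) F]
    (hcard : Fintype.card F = 2 ^ m)
    (f : F → ZMod 2) (hf0 : f 0 = 0) (hpl : IsPlateaued2 m s F f) :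
    codeCbar 2 F f ⊆ (dualCode (codeCbar 2 F f) : Set (F → ZMod 2)) ∧
    Module.finrank (ZMod 2) (dualCode (codeCbar 2 F f)) = 2 ^ m - m - 2 ∧
    hasMinDist (dualCode (codeCbar 2 F f) : Set (F → ZMod 2)) 4 := by
  have hm4 : 4 ≤ m := by omega
  refine ⟨?_, finrank_dual m s hs hms hcard f hf0 hpl, ?_, ?_⟩
  · intro v hv
    exact SetLike.mem_coe.mpr (mem_dualCode.mpr
      (fun w hw => sum_prod_zero m s hs hpar hms hcard f hpl hv hw))
  · obtain ⟨v, hv, hv0, hw4⟩ := exists_wt4 m hm4 hcard f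
    exact ⟨v, SetLike.mem_coe.mpr hv, hv0, hw4⟩
  · intro v hv hv0
    exact dual_min_dist_lb f hf0 (SetLike.mem_coe.mp hv) hv0
end

section
/- Let m be an integer and let s be an integer with 0 ≤ s ≤ m−2 such that m+s is even and m+s ≥ 6, and let f : F_q → F_2 (q = 2^m) be an s-plateaued Boolean function with f(0) = 0 which is unbalanced. If W_f(0) = −2^{(m+s)/2}, then the minimum distance of the extended binary code C̄_f' equals 2^{m−1} − 2^{(m+s−2)/2} + 1; if W_f(0) = 2^{(m+s)/2}, then the minimum distance of C̄_f' equals 2^{m−1} − 2^{(m+s−2)/2} + 2. -/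
open Finset

section AuxWt

lemma wtH_eq_sum {n : Type} [Fintype n] {K : Type} [Zero K] [DecidableEq K] (v : n → K) :
    wtH v = ∑ i, if v i ≠ 0 then 1 else 0 := by
  simp [wtH, Finset.card_filter]

lemma wtH_sum_elim {A B : Type} [Fintype A] [Fintype B] {K : Type} [Zero K] [DecidableEq K]
    (u : A → K) (w : B → K) : wtH (Sum.elim u w) = wtH u + wtH w := by
  rw [wtH_eq_sum, wtH_eq_sum, wtH_eq_sum, Fintype.sum_sum_type]; rfl

lemma wtH_cons {n : ℕ} {K : Type} [Zero K] [DecidableEq K] (x : K) (v : Fin n → K) :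
    wtH (Fin.cons x v) = (if x ≠ 0 then 1 else 0) + wtH v := by
  simp [wtH_eq_sum, Fin.sum_univ_succ]

lemma wtH_eq_zero_iff {n : Type} [Fintype n] {K : Type} [Zero K] [DecidableEq K] (v : n → K) :
    wtH v = 0 ↔ v = 0 := by
  simp [wtH, Finset.card_eq_zero, Finset.filter_eq_empty_iff, funext_iff]

end AuxWt

theorem statement15 (m s : ℕ) (hs : s ≤ m - 2) (hpar : Even (m + s)) (hms : 6 ≤ m + s)
    (F : Type) [Field F] [Fintype F] [Algebra (ZMod 2) F]
    (hcard : Fintype.card F = 2 ^ m)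
    (α : F) (hα : ∀ x : F, x ≠ 0 → ∃ k : ℕ, x = α ^ k)
    (f : F → ZMod 2) (hf0 : f 0 = 0) (hpl : IsPlateaued2 m s F f)
    (hub : walsh2 F f 0 ≠ 0) :
    (walsh2 F f 0 = -2 ^ ((m + s) / 2) → hasMinDist (extCode 2 m F f α)
      (2 ^ (m - 1) - 2 ^ ((m + s - 2) / 2) + 1)) ∧
    (walsh2 F f 0 = 2 ^ ((m + s) / 2) → hasMinDist (extCode 2 m F f α)
      (2 ^ (m - 1) - 2 ^ ((m + s - 2) / 2) + 2)) := by
  classical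
  obtain ⟨r, hr⟩ := hpar
  obtain ⟨k, hk⟩ : ∃ k, (m + s) / 2 = k := ⟨_, rfl⟩
  rw [hk]
  have h2k : m + s = 2 * k := by omega
  have hk3 : 3 ≤ k := by omega
  have hmk : k + 1 ≤ m := by omega
  rw [show (m + s - 2) / 2 = k - 1 from by omega]
  obtain ⟨q1, hq1⟩ : ∃ x, 2 ^ (m - 1) = x := ⟨_, rfl⟩
  obtain ⟨t1, ht1⟩ : ∃ x, 2 ^ (k - 1) = x := ⟨_, rfl⟩
  rw [hq1, ht1]
  have e1 : 2 ^ m = 2 * q1 := by rw [← hq1, ← pow_succ']; congr 1; omega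
  have e2 : 2 ^ k = 2 * t1 := by rw [← ht1, ← pow_succ']; congr 1; omega
  have e3 : 2 * t1 ≤ q1 := by
    rw [← e2, ← hq1]; exact Nat.pow_le_pow_right (by norm_num) (by omega)
  have e4 : 4 ≤ t1 := by
    rw [← ht1]
    calc 4 = 2 ^ 2 := by norm_num
    _ ≤ 2 ^ (k - 1) := Nat.pow_le_pow_right (by norm_num) (by omega)
  have z1 : (2 : ℤ) ^ m = 2 * (q1 : ℤ) := by exact_mod_cast e1
  have z2 : (2 : ℤ) ^ k = 2 * (t1 : ℤ) := by exact_mod_cast e2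
  have hZ2 : ∀ z : ZMod 2, z = 0 ∨ z = 1 := by decide
  have hne1 : ∀ z : ZMod 2, (¬ z = 1) ↔ z = 0 := by decide
  -- the basic count
  have hN : ∀ b : F,
      2 * (((Finset.univ.filter fun x =>
        f x + Algebra.trace (ZMod 2) F (b * x) = 1).card : ℤ))
      = 2 ^ m - walsh2 F f b := by
    intro b
    have hval : ∀ z : ZMod 2, ((-1 : ℤ)) ^ z.val = 1 - 2 * (if z = 1 then 1 else 0) := by decide
    have hsum : walsh2 F f b
        = ∑ x : F, ((1 : ℤ) - 2 * (if f x + Algebra.trace (ZMod 2) F (b * x) = 1 then 1 else 0)) :=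
      Finset.sum_congr rfl fun x _ => hval _
    rw [hsum, Finset.sum_sub_distrib, Finset.sum_const, ← Finset.mul_sum, Finset.sum_boole,
      Finset.card_univ, hcard]
    simp only [nsmul_eq_mul, mul_one]
    push_cast
    ring
  have hNle : ∀ b : F, (Finset.univ.filter fun x =>
      f x + Algebra.trace (ZMod 2) F (b * x) = 1).card ≤ 2 ^ m := by
    intro b
    calc (Finset.univ.filter fun x => f x + Algebra.trace (ZMod 2) F (b * x) = 1).card
        ≤ (Finset.univ : Finset F).card := Finset.card_filter_le _ _
    _ = 2 ^ m := by rw [Finset.card_univ, hcard]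
  have hNc : ∀ b : F, (Finset.univ.filter fun x =>
        f x + Algebra.trace (ZMod 2) F (b * x) = 0).card
      = 2 ^ m - (Finset.univ.filter fun x =>
        f x + Algebra.trace (ZMod 2) F (b * x) = 1).card := by
    intro b
    have h := Finset.card_filter_add_card_filter_not
      (s := (Finset.univ : Finset F)) (p := fun x => f x + Algebra.trace (ZMod 2) F (b * x) = 1)
    rw [Finset.card_univ, hcard] at h
    have h2 : (Finset.univ.filter fun x => ¬ (f x + Algebra.trace (ZMod 2) F (b * x) = 1))
        = Finset.univ.filter fun x => f x + Algebra.trace (ZMod 2) F (b * x) = 0 :=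
      Finset.filter_congr fun x _ => hne1 _
    rw [h2] at h
    omega
  -- Walsh values
  have hWcases : ∀ b : F, walsh2 F f b = 0 ∨ walsh2 F f b = 2 ^ k ∨ walsh2 F f b = -(2 ^ k) := by
    intro b
    rcases hpl b with h | h
    · left; exact (pow_eq_zero_iff (by norm_num : 2 ≠ 0)).mp h
    · have ht : walsh2 F f b ^ 2 = ((2 : ℤ) ^ k) ^ 2 := by
        rw [h, ← pow_mul]; congr 1; omega
      have hfac : (walsh2 F f b - 2 ^ k) * (walsh2 F f b + 2 ^ k) = 0 := by
        linear_combination ht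
      rcases mul_eq_zero.mp hfac with h3 | h3
      · right; left; linarith
      · right; right; linarith
  have hWbound : ∀ b : F, -((2 : ℤ) ^ k) ≤ walsh2 F f b ∧ walsh2 F f b ≤ 2 ^ k := by
    intro b
    have hpos : (0 : ℤ) < 2 ^ k := by positivity
    rcases hWcases b with h | h | h <;> rw [h] <;> constructor <;> linarith
  have hlow : ∀ b : F,
      (q1 : ℤ) - t1 ≤ ((Finset.univ.filter fun x =>
        f x + Algebra.trace (ZMod 2) F (b * x) = 1).card : ℤ) ∧
      ((Finset.univ.filter fun x =>
        f x + Algebra.trace (ZMod 2) F (b * x) = 1).card : ℤ) ≤ (q1 : ℤ) + t1 := by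
    intro b
    have h := hN b
    obtain ⟨hb1, hb2⟩ := hWbound b
    rw [z1] at h
    rw [z2] at hb1 hb2
    constructor <;> omega
  -- trace is balanced
  have htrsurj : ∃ z : F, Algebra.trace (ZMod 2) F z = 1 := by
    obtain ⟨z, hz⟩ := DFunLike.ne_iff.mp (Algebra.trace_ne_zero (ZMod 2) F)
    refine ⟨z, ?_⟩
    rcases hZ2 (Algebra.trace (ZMod 2) F z) with h0 | h1
    · exact absurd h0 (by simpa using hz)
    · exact h1
  haveI : CharP F 2 := charP_of_injective_algebraMap (algebraMap (ZMod 2) F).injective 2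
  have htrcount : ∀ b : F, b ≠ 0 → ∀ v : ZMod 2,
      (Finset.univ.filter fun x => Algebra.trace (ZMod 2) F (b * x) = v).card = q1 := by
    intro b hb v
    obtain ⟨z, hz⟩ := htrsurj
    have hbx0 : Algebra.trace (ZMod 2) F (b * (b⁻¹ * z)) = 1 := by
      rw [← mul_assoc, mul_inv_cancel₀ hb, one_mul]; exact hz
    have hswap : ∀ w : ZMod 2,
        (Finset.univ.filter fun x => Algebra.trace (ZMod 2) F (b * x) = w).card
        = (Finset.univ.filter fun x => Algebra.trace (ZMod 2) F (b * x) = w + 1).card := by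
      intro w
      refine Finset.card_bij' (fun x _ => x + b⁻¹ * z) (fun x _ => x + b⁻¹ * z) ?_ ?_ ?_ ?_
      · intro x hx
        simp only [Finset.mem_filter, Finset.mem_univ, true_and] at hx ⊢
        rw [mul_add, map_add, hx, hbx0]
      · intro x hx
        simp only [Finset.mem_filter, Finset.mem_univ, true_and] at hx ⊢
        rw [mul_add, map_add, hx, hbx0]
        have hA : ∀ u : ZMod 2, u + 1 + 1 = u := by decide
        exact hA w
      · intro x _
        show x + b⁻¹ * z + b⁻¹ * z = x
        rw [add_assoc]
        simp [CharTwo.add_self_eq_zero]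
      · intro x _
        show x + b⁻¹ * z + b⁻¹ * z = x
        rw [add_assoc]
        simp [CharTwo.add_self_eq_zero]
    have hsum := Finset.card_filter_add_card_filter_not
      (s := (Finset.univ : Finset F)) (p := fun x => Algebra.trace (ZMod 2) F (b * x) = 1)
    rw [Finset.card_univ, hcard, e1] at hsum
    have h2 : (Finset.univ.filter fun x => ¬ (Algebra.trace (ZMod 2) F (b * x) = 1))
        = Finset.univ.filter fun x => Algebra.trace (ZMod 2) F (b * x) = 0 :=
      Finset.filter_congr fun x _ => hne1 _
    rw [h2] at hsum
    have h01 := hswap 0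
    rw [show (0 : ZMod 2) + 1 = 1 from by decide] at h01
    rcases hZ2 v with rfl | rfl
    · omega
    · omega
  -- linear independence of powers of α
  have hind : ∀ aa : Fin m → ZMod 2, (∑ i : Fin m, aa i • α ^ (i : ℕ)) = 0 → aa = 0 := by
    have hintegral : IsIntegral (ZMod 2) α := IsIntegral.of_finite (ZMod 2) α
    have htop : IntermediateField.adjoin (ZMod 2) {α} = ⊤ := by
      rw [eq_top_iff]
      intro x _
      rcases eq_or_ne x 0 with rfl | hx
      · exact zero_mem _
      · obtain ⟨j, rfl⟩ := hα x hx
        exact pow_mem (IntermediateField.mem_adjoin_simple_self (ZMod 2) α) j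
    have hfr : Module.finrank (ZMod 2) F = m := by
      have hc : Fintype.card F = Fintype.card (ZMod 2) ^ Module.finrank (ZMod 2) F :=
        Module.card_eq_pow_finrank
      rw [ZMod.card, hcard] at hc
      exact Nat.pow_right_injective (by norm_num) hc.symm
    have hdeg : (minpoly (ZMod 2) α).natDegree = m := by
      have h1 := IntermediateField.adjoin.finrank hintegral
      rw [htop, IntermediateField.finrank_top', hfr] at h1
      exact h1.symm
    have hli := linearIndependent_pow (K := ZMod 2) (S := F) α
    rw [hdeg] at hli
    intro aa haa
    have h := Fintype.linearIndependent_iff.mp hli aa haa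
    funext i
    exact h i
  -- tail predicate rewrites
  have hiff1 : ∀ (cc u w : ZMod 2), ((1 : ZMod 2) * u + w + 1 + cc ≠ 0) ↔ u + w = cc := by decide
  have hiff0 : ∀ (cc u w : ZMod 2), ((0 : ZMod 2) * u + w + 0 + cc ≠ 0) ↔ w = 1 + cc := by decide
  -- weight decomposition
  have hwteq : ∀ (c a : ZMod 2) (aa : Fin m → ZMod 2),
      wtH (Sum.elim (Fin.cons c (Fin.cons a aa))
        (fun x => a * f x +
          Algebra.trace (ZMod 2) F ((∑ i : Fin m, aa i • α ^ (i : ℕ)) * x) + a + c))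
      = (if c ≠ 0 then 1 else 0) + ((if a ≠ 0 then 1 else 0) + wtH aa)
        + (Finset.univ.filter fun x => a * f x +
            Algebra.trace (ZMod 2) F ((∑ i : Fin m, aa i • α ^ (i : ℕ)) * x) + a + c ≠ 0).card := by
    intro c a aa
    rw [wtH_sum_elim, wtH_cons, wtH_cons]
    rfl
  have hif0 : (if (0 : ZMod 2) ≠ 0 then 1 else 0) = 0 := by simp
  have hif1 : (if (1 : ZMod 2) ≠ 0 then 1 else 0) = 1 := by simp
  have hwt0 : wtH (0 : Fin m → ZMod 2) = 0 := (wtH_eq_zero_iff _).mpr rfl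
  have hb0 : (∑ i : Fin m, (0 : Fin m → ZMod 2) i • α ^ (i : ℕ)) = 0 := by simp
  constructor
  · -- case W_f(0) = -2^k
    intro hW
    have hNz : ((Finset.univ.filter fun x =>
        f x + Algebra.trace (ZMod 2) F ((0 : F) * x) = 1).card) = q1 + t1 := by
      have h := hN 0
      rw [hW, z1, z2] at h
      omega
    constructor
    · -- witness: c = 0, a = 1, aa = 0
      refine ⟨_, ⟨0, 1, 0, rfl⟩, ?_, ?_⟩
      · intro h0
        have hww := hwteq 0 1 0
        rw [h0, (wtH_eq_zero_iff _).mpr rfl, hif0, hif1, hwt0] at hww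
        omega
      · rw [hwteq 0 1 0, hif0, hif1, hwt0]
        have hflt : (Finset.univ.filter fun x => (1 : ZMod 2) * f x +
            Algebra.trace (ZMod 2) F ((∑ i : Fin m, (0 : Fin m → ZMod 2) i • α ^ (i : ℕ)) * x)
              + 1 + 0 ≠ 0)
            = Finset.univ.filter fun x =>
              f x + Algebra.trace (ZMod 2) F ((0 : F) * x) = 0 := by
          refine Finset.filter_congr fun x _ => ?_
          rw [hb0]
          exact hiff1 0 _ _
        rw [hflt, hNc 0, hNz]
        omega
    · -- lower bound
      rintro v ⟨c, a, aa, rfl⟩ hvne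
      rw [hwteq]
      rcases hZ2 a with rfl | rfl
      · -- a = 0
        by_cases haa : aa = 0
        · subst haa
          rcases hZ2 c with rfl | rfl
          · exfalso
            apply hvne
            funext i
            rcases i with i | x
            · simp only [Sum.elim_inl, Pi.zero_apply]
              induction i using Fin.cases with
              | zero => rw [Fin.cons_zero]
              | succ j =>
                rw [Fin.cons_succ]
                induction j using Fin.cases with
                | zero => rw [Fin.cons_zero]
                | succ l => rw [Fin.cons_succ]; rfl
            · simp
          · have hful : (Finset.univ.filter fun x => (0 : ZMod 2) * f x +
                Algebra.trace (ZMod 2) F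
                  ((∑ i : Fin m, (0 : Fin m → ZMod 2) i • α ^ (i : ℕ)) * x) + 0 + 1 ≠ 0)
                = (Finset.univ : Finset F) := by
              refine Finset.filter_true_of_mem fun x _ => ?_
              rw [hb0]
              simp
            rw [hful, Finset.card_univ, hcard, hif1, hif0, hwt0]
            omega
        · have hbne : (∑ i : Fin m, aa i • α ^ (i : ℕ)) ≠ 0 := fun h => haa (hind aa h)
          have hwaa : wtH aa ≠ 0 := fun h => haa ((wtH_eq_zero_iff aa).mp h)
          have ht0 : (Finset.univ.filter fun x => (0 : ZMod 2) * f x +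
              Algebra.trace (ZMod 2) F ((∑ i : Fin m, aa i • α ^ (i : ℕ)) * x) + 0 + c ≠ 0)
              = Finset.univ.filter fun x =>
                Algebra.trace (ZMod 2) F ((∑ i : Fin m, aa i • α ^ (i : ℕ)) * x) = 1 + c :=
            Finset.filter_congr fun x _ => hiff0 c _ _
          rw [ht0, htrcount _ hbne _, hif0]
          have hcif : (if c ≠ 0 then 1 else 0) = 0 ∨ (if c ≠ 0 then 1 else 0) = 1 := by
            rcases hZ2 c with rfl | rfl
            · exact Or.inl hif0
            · exact Or.inr hif1
          rcases hcif with h | h <;> rw [h] <;> omega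
      · -- a = 1
        have htl : (Finset.univ.filter fun x => (1 : ZMod 2) * f x +
            Algebra.trace (ZMod 2) F ((∑ i : Fin m, aa i • α ^ (i : ℕ)) * x) + 1 + c ≠ 0)
            = Finset.univ.filter fun x =>
              f x + Algebra.trace (ZMod 2) F ((∑ i : Fin m, aa i • α ^ (i : ℕ)) * x) = c :=
          Finset.filter_congr fun x _ => hiff1 c _ _
        rw [htl, hif1]
        obtain ⟨hl1, hl2⟩ := hlow (∑ i : Fin m, aa i • α ^ (i : ℕ))
        have hle := hNle (∑ i : Fin m, aa i • α ^ (i : ℕ))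
        rcases hZ2 c with rfl | rfl
        · rw [hif0, hNc]
          omega
        · rw [hif1]
          omega
  · -- case W_f(0) = 2^k
    intro hW
    have hNz : ((Finset.univ.filter fun x =>
        f x + Algebra.trace (ZMod 2) F ((0 : F) * x) = 1).card) = q1 - t1 := by
      have h := hN 0
      rw [hW, z1, z2] at h
      omega
    constructor
    · -- witness: c = 1, a = 1, aa = 0
      refine ⟨_, ⟨1, 1, 0, rfl⟩, ?_, ?_⟩
      · intro h0
        have hww := hwteq 1 1 0
        rw [h0, (wtH_eq_zero_iff _).mpr rfl, hif1, hwt0] at hww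
        omega
      · rw [hwteq 1 1 0, hif1, hwt0]
        have hflt : (Finset.univ.filter fun x => (1 : ZMod 2) * f x +
            Algebra.trace (ZMod 2) F ((∑ i : Fin m, (0 : Fin m → ZMod 2) i • α ^ (i : ℕ)) * x)
              + 1 + 1 ≠ 0)
            = Finset.univ.filter fun x =>
              f x + Algebra.trace (ZMod 2) F ((0 : F) * x) = 1 := by
          refine Finset.filter_congr fun x _ => ?_
          rw [hb0]
          exact hiff1 1 _ _
        rw [hflt, hNz]
        omega
    · rintro v ⟨c, a, aa, rfl⟩ hvne
      rw [hwteq]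
      rcases hZ2 a with rfl | rfl
      · by_cases haa : aa = 0
        · subst haa
          rcases hZ2 c with rfl | rfl
          · exfalso
            apply hvne
            funext i
            rcases i with i | x
            · simp only [Sum.elim_inl, Pi.zero_apply]
              induction i using Fin.cases with
              | zero => rw [Fin.cons_zero]
              | succ j =>
                rw [Fin.cons_succ]
                induction j using Fin.cases with
                | zero => rw [Fin.cons_zero]
                | succ l => rw [Fin.cons_succ]; rfl
            · simp
          · have hful : (Finset.univ.filter fun x => (0 : ZMod 2) * f x +
                Algebra.trace (ZMod 2) F
                  ((∑ i : Fin m, (0 : Fin m → ZMod 2) i • α ^ (i : ℕ)) * x) + 0 + 1 ≠ 0)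
                = (Finset.univ : Finset F) := by
              refine Finset.filter_true_of_mem fun x _ => ?_
              rw [hb0]
              simp
            rw [hful, Finset.card_univ, hcard, hif1, hif0, hwt0]
            omega
        · have hbne : (∑ i : Fin m, aa i • α ^ (i : ℕ)) ≠ 0 := fun h => haa (hind aa h)
          have hwaa : wtH aa ≠ 0 := fun h => haa ((wtH_eq_zero_iff aa).mp h)
          have ht0 : (Finset.univ.filter fun x => (0 : ZMod 2) * f x +
              Algebra.trace (ZMod 2) F ((∑ i : Fin m, aa i • α ^ (i : ℕ)) * x) + 0 + c ≠ 0)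
              = Finset.univ.filter fun x =>
                Algebra.trace (ZMod 2) F ((∑ i : Fin m, aa i • α ^ (i : ℕ)) * x) = 1 + c :=
            Finset.filter_congr fun x _ => hiff0 c _ _
          rw [ht0, htrcount _ hbne _, hif0]
          have hcif : (if c ≠ 0 then 1 else 0) = 0 ∨ (if c ≠ 0 then 1 else 0) = 1 := by
            rcases hZ2 c with rfl | rfl
            · exact Or.inl hif0
            · exact Or.inr hif1
          rcases hcif with h | h <;> rw [h] <;> omega
      · have htl : (Finset.univ.filter fun x => (1 : ZMod 2) * f x +
            Algebra.trace (ZMod 2) F ((∑ i : Fin m, aa i • α ^ (i : ℕ)) * x) + 1 + c ≠ 0)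
            = Finset.univ.filter fun x =>
              f x + Algebra.trace (ZMod 2) F ((∑ i : Fin m, aa i • α ^ (i : ℕ)) * x) = c :=
          Finset.filter_congr fun x _ => hiff1 c _ _
        rw [htl, hif1]
        by_cases haa : aa = 0
        · subst haa
          rw [hwt0]
          rcases hZ2 c with rfl | rfl
          · have hfe : (Finset.univ.filter fun x => f x + Algebra.trace (ZMod 2) F
                ((∑ i : Fin m, (0 : Fin m → ZMod 2) i • α ^ (i : ℕ)) * x) = 0)
                = Finset.univ.filter fun x =>
                  f x + Algebra.trace (ZMod 2) F ((0 : F) * x) = 0 :=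
              Finset.filter_congr fun x _ => by rw [hb0]
            rw [hif0, hfe, hNc 0, hNz]
            omega
          · have hfe : (Finset.univ.filter fun x => f x + Algebra.trace (ZMod 2) F
                ((∑ i : Fin m, (0 : Fin m → ZMod 2) i • α ^ (i : ℕ)) * x) = 1)
                = Finset.univ.filter fun x =>
                  f x + Algebra.trace (ZMod 2) F ((0 : F) * x) = 1 :=
              Finset.filter_congr fun x _ => by rw [hb0]
            rw [hif1, hfe, hNz]
            omega
        · have hwaa : wtH aa ≠ 0 := fun h => haa ((wtH_eq_zero_iff aa).mp h)
          obtain ⟨hl1, hl2⟩ := hlow (∑ i : Fin m, aa i • α ^ (i : ℕ))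
          have hle := hNle (∑ i : Fin m, aa i • α ^ (i : ℕ))
          rcases hZ2 c with rfl | rfl
          · rw [hif0, hNc]
            omega
          · rw [hif1]
            omega
end

section
/- Let m be an integer and let s be an integer with 0 ≤ s ≤ m−2 such that m+s is even and m+s ≥ 6, and let f : F_q → F_2 (q = 2^m) be an s-plateaued Boolean function with f(0) = 0. Then the dual (C̄_f')^⊥ of the extended binary code C̄_f' has length 2^m + m + 2, dimension 2^m, and minimum distance exactly 3. -/
open Finset

namespace Statement16Aux
open Finset

noncomputable section

/-- standard basis vector -/
def sgl {m : ℕ} (j : Fin (m+2)) : Fin (m+2) → ZMod 2 := Pi.single j 1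

lemma sgl_apply {m : ℕ} (j i : Fin (m+2)) : sgl j i = if i = j then 1 else 0 :=
  Pi.single_apply j 1 i

lemma cons_cons_eq {m : ℕ} {X : Type*} (p : Fin (m+2) → X) :
    (Fin.cons (p 0) (Fin.cons (p 1) (fun k : Fin m => p k.succ.succ)) : Fin (m+2) → X) = p := by
  funext i
  refine Fin.cases rfl (fun j => ?_) i
  refine Fin.cases ?_ (fun k => ?_) j <;> simp [Fin.succ_zero_eq_one]

/-- the codeword of `extCode` whose parameter vector is the `j`-th basis vector -/
def rowR (m : ℕ) (F : Type) [Field F] [Fintype F] [Algebra (ZMod 2) F]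
    (f : F → ZMod 2) (α : F) (j : Fin (m+2)) : Fin (m+2) ⊕ F → ZMod 2 :=
  Sum.elim (sgl j)
    (fun x => sgl j 1 * f x +
      Algebra.trace (ZMod 2) F
        ((∑ i : Fin m, sgl j i.succ.succ • α ^ (i : ℕ)) * x) +
      sgl j 1 + sgl j 0)

variable {m : ℕ} {F : Type} [Field F] [Fintype F] [Algebra (ZMod 2) F] {f : F → ZMod 2} {α : F}

lemma rowR_mem (j : Fin (m+2)) : rowR m F f α j ∈ extCode 2 m F f α := by
  refine ⟨sgl j 0, sgl j 1, fun k => sgl j k.succ.succ, ?_⟩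
  rw [show (Fin.cons (sgl j 0) (Fin.cons (sgl j 1) (fun k : Fin m => sgl j k.succ.succ)) :
      Fin (m+2) → ZMod 2) = sgl j from cons_cons_eq (sgl j)]
  rfl

lemma rowR_inl (j : Fin (m+2)) (i : Fin (m+2)) :
    rowR m F f α j (Sum.inl i) = sgl j i := rfl

lemma one_ne_zero' : (1 : Fin (m+2)) ≠ 0 := by simp [Fin.ext_iff]

lemma rowR_zero_inr (x : F) : rowR m F f α 0 (Sum.inr x) = 1 := by
  simp [rowR, sgl_apply, Fin.succ_ne_zero, one_ne_zero' (m := m)]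

lemma rowR_one_inr (x : F) : rowR m F f α 1 (Sum.inr x) = f x + 1 := by
  simp [rowR, sgl_apply, Fin.succ_succ_ne_one, (one_ne_zero' (m := m)).symm]

lemma rowR_succ_inr (k : Fin m) (x : F) :
    rowR m F f α k.succ.succ (Sum.inr x) = Algebra.trace (ZMod 2) F (α ^ (k : ℕ) * x) := by
  have h1 : (1 : Fin (m+2)) ≠ k.succ.succ := (Fin.succ_succ_ne_one k).symm
  have h0 : (0 : Fin (m+2)) ≠ k.succ.succ := (Fin.succ_ne_zero _).symm
  have hsum : (∑ i : Fin m, sgl k.succ.succ i.succ.succ • α ^ (i : ℕ)) = α ^ (k:ℕ) := by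
    rw [Finset.sum_eq_single k]
    · simp [sgl_apply]
    · intro i _ hik
      have : i.succ.succ ≠ k.succ.succ := by simpa [Fin.succ_inj] using hik
      simp [sgl_apply, this]
    · simp
  simp [rowR, sgl_apply, hsum, if_neg h1, if_neg h0]

lemma pointwise (c a : ZMod 2) (aa : Fin m → ZMod 2) (i : Fin (m+2) ⊕ F) :
    Sum.elim (Fin.cons c (Fin.cons a aa))
      (fun x => a * f x +
        Algebra.trace (ZMod 2) F ((∑ i : Fin m, aa i • α ^ (i : ℕ)) * x) + a + c) i
    = ∑ j : Fin (m+2), (Fin.cons c (Fin.cons a aa) : Fin (m+2) → ZMod 2) j * rowR m F f α j i := by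
  cases i with
  | inl i =>
      simp only [Sum.elim_inl, rowR_inl, sgl_apply, mul_ite, mul_one, mul_zero]
      rw [Finset.sum_ite_eq Finset.univ i]
      simp
  | inr x =>
      rw [Fin.sum_univ_succ, Fin.sum_univ_succ]
      simp only [Fin.cons_succ, Fin.cons_zero]
      simp only [Fin.succ_zero_eq_one, rowR_zero_inr, rowR_one_inr, rowR_succ_inr, Sum.elim_inr]
      have htr : Algebra.trace (ZMod 2) F ((∑ i : Fin m, aa i • α ^ (i : ℕ)) * x)
          = ∑ k : Fin m, aa k * Algebra.trace (ZMod 2) F (α ^ (k : ℕ) * x) := by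
        rw [Finset.sum_mul]
        simp_rw [smul_mul_assoc]
        rw [map_sum]
        simp_rw [map_smul, smul_eq_mul]
      rw [htr]
      ring

lemma mem_dual_iff (u : Fin (m+2) ⊕ F → ZMod 2) :
    u ∈ dualCode (extCode 2 m F f α) ↔
      ∀ j : Fin (m+2), ∑ i : Fin (m+2) ⊕ F, u i * rowR m F f α j i = 0 := by
  constructor
  · intro h j
    exact h (rowR m F f α j) (rowR_mem j)
  · rintro h v ⟨c, a, aa, rfl⟩
    have : ∀ i, u i * Sum.elim (Fin.cons c (Fin.cons a aa))
        (fun x => a * f x +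
          Algebra.trace (ZMod 2) F ((∑ i : Fin m, aa i • α ^ (i : ℕ)) * x) + a + c) i
        = ∑ j : Fin (m+2), (Fin.cons c (Fin.cons a aa) : Fin (m+2) → ZMod 2) j
            * (u i * rowR m F f α j i) := by
      intro i
      rw [pointwise c a aa i, Finset.mul_sum]
      exact Finset.sum_congr rfl (fun j _ => by ring)
    calc ∑ i : Fin (m+2) ⊕ F, u i * Sum.elim (Fin.cons c (Fin.cons a aa))
          (fun x => a * f x +
            Algebra.trace (ZMod 2) F ((∑ i : Fin m, aa i • α ^ (i : ℕ)) * x) + a + c) i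
        = ∑ i : Fin (m+2) ⊕ F, ∑ j : Fin (m+2),
            (Fin.cons c (Fin.cons a aa) : Fin (m+2) → ZMod 2) j * (u i * rowR m F f α j i) :=
          Finset.sum_congr rfl (fun i _ => this i)
      _ = ∑ j : Fin (m+2), (Fin.cons c (Fin.cons a aa) : Fin (m+2) → ZMod 2) j
            * ∑ i : Fin (m+2) ⊕ F, u i * rowR m F f α j i := by
          rw [Finset.sum_comm]
          exact Finset.sum_congr rfl (fun j _ => by rw [Finset.mul_sum])
      _ = 0 := by simp [h]

/-- the syndrome map -/
def psiMap (m : ℕ) (F : Type) [Field F] [Fintype F] [Algebra (ZMod 2) F]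
    (f : F → ZMod 2) (α : F) :
    (Fin (m+2) ⊕ F → ZMod 2) →ₗ[ZMod 2] (Fin (m+2) → ZMod 2) where
  toFun u := fun j => ∑ i : Fin (m+2) ⊕ F, u i * rowR m F f α j i
  map_add' u v := by
    funext j
    simp [add_mul, Finset.sum_add_distrib]
  map_smul' t u := by
    funext j
    simp only [Pi.smul_apply, smul_eq_mul, RingHom.id_apply]
    rw [Finset.mul_sum]
    exact Finset.sum_congr rfl (fun i _ => by ring)

lemma dual_eq_ker :
    dualCode (extCode 2 m F f α) = LinearMap.ker (psiMap m F f α) := by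
  ext u
  rw [LinearMap.mem_ker]
  show u ∈ dualCode (extCode 2 m F f α) ↔ _
  rw [mem_dual_iff, funext_iff]
  simp [psiMap]

lemma psi_surj : Function.Surjective (psiMap m F f α) := by
  intro w
  refine ⟨Sum.elim w 0, ?_⟩
  funext j
  show ∑ i : Fin (m+2) ⊕ F, Sum.elim w 0 i * rowR m F f α j i = w j
  rw [Fintype.sum_sum_type]
  simp only [Sum.elim_inl, Sum.elim_inr, Pi.zero_apply, zero_mul, Finset.sum_const_zero,
    add_zero, rowR_inl, sgl_apply, mul_ite, mul_one, mul_zero]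
  rw [Finset.sum_ite_eq' Finset.univ j]
  simp

/-- the trace codeword with parameters c=0, a=0, aa -/
def trw (m : ℕ) (F : Type) [Field F] [Fintype F] [Algebra (ZMod 2) F]
    (f : F → ZMod 2) (α : F) (aa : Fin m → ZMod 2) : Fin (m+2) ⊕ F → ZMod 2 :=
  Sum.elim (Fin.cons 0 (Fin.cons 0 aa))
    (fun x => 0 * f x +
      Algebra.trace (ZMod 2) F ((∑ i : Fin m, aa i • α ^ (i : ℕ)) * x) + 0 + 0)

lemma trw_mem (aa : Fin m → ZMod 2) : trw m F f α aa ∈ extCode 2 m F f α :=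
  ⟨0, 0, aa, rfl⟩

lemma trw_inl_zero (aa : Fin m → ZMod 2) : trw m F f α aa (Sum.inl 0) = 0 := rfl

lemma trw_inr (aa : Fin m → ZMod 2) (x : F) :
    trw m F f α aa (Sum.inr x)
      = Algebra.trace (ZMod 2) F ((∑ i : Fin m, aa i • α ^ (i : ℕ)) * x) := by
  simp [trw]

lemma exists_tr (hcard : Fintype.card F = 2 ^ m)
    (hα : ∀ x : F, x ≠ 0 → ∃ k : ℕ, x = α ^ k) (z : F) (hz : z ≠ 0) :
    ∃ aa : Fin m → ZMod 2,
      Algebra.trace (ZMod 2) F ((∑ i : Fin m, aa i • α ^ (i : ℕ)) * z) ≠ 0 := by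
  have : FiniteDimensional (ZMod 2) F := Module.Finite.of_finite
  -- minpoly degree is m
  have hfr : Module.finrank (ZMod 2) F = m := by
    have h := Module.card_eq_pow_finrank (K := ZMod 2) (V := F)
    rw [ZMod.card, hcard] at h
    exact (Nat.pow_right_injective le_rfl h).symm
  have htop : IntermediateField.adjoin (ZMod 2) {α} = ⊤ := by
    rw [eq_top_iff]
    intro x _
    rcases eq_or_ne x 0 with rfl | hx
    · exact zero_mem _
    · obtain ⟨k, rfl⟩ := hα x hx
      exact pow_mem (IntermediateField.mem_adjoin_simple_self _ _) _
  have hdeg : (minpoly (ZMod 2) α).natDegree = m := by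
    have h1 := IntermediateField.adjoin.finrank (K := ZMod 2) (L := F) (x := α)
      (IsIntegral.of_finite _ _)
    rw [htop, IntermediateField.finrank_top'] at h1
    rw [← h1, hfr]
  -- the powers span, so every b is of the form ∑ aa i • α^i
  have hbij : Function.Bijective (fun aa : Fin m → ZMod 2 => ∑ i : Fin m, aa i • α ^ (i : ℕ)) := by
    have li : LinearIndependent (ZMod 2) fun i : Fin m => α ^ (i : ℕ) := by
      have := linearIndependent_pow (K := ZMod 2) α
      rw [hdeg] at this
      exact this
    have hinj : Function.Injective
        (fun aa : Fin m → ZMod 2 => ∑ i : Fin m, aa i • α ^ (i : ℕ)) := by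
      intro aa aa' h
      simp only at h
      funext i
      have h0 : ∑ i : Fin m, (aa i - aa' i) • α ^ (i : ℕ) = 0 := by
        simp [sub_smul, Finset.sum_sub_distrib, h]
      exact sub_eq_zero.mp (Fintype.linearIndependent_iff.mp li (fun i => aa i - aa' i) h0 i)
    rw [Fintype.bijective_iff_injective_and_card]
    exact ⟨hinj, by simp [hcard, ZMod.card]⟩
  -- trace nondegeneracy
  have : Algebra.IsAlgebraic (ZMod 2) F := Algebra.IsAlgebraic.of_finite _ _
  have hnd := traceForm_nondegenerate (ZMod 2) F
  have hb : ∃ b : F, Algebra.trace (ZMod 2) F (b * z) ≠ 0 := by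
    by_contra hf
    push_neg at hf
    exact hz (hnd.1 z (fun b => by simpa [Algebra.traceForm_apply, mul_comm] using hf b))
  obtain ⟨b, hb⟩ := hb
  obtain ⟨aa, haa⟩ := hbij.2 b
  exact ⟨aa, by simp only at haa; rw [haa]; exact hb⟩

lemma col_nonzero (i : Fin (m+2) ⊕ F) :
    ∃ w ∈ extCode 2 m F f α, w i ≠ 0 := by
  cases i with
  | inl j =>
      refine ⟨rowR m F f α j, rowR_mem j, ?_⟩
      rw [rowR_inl, sgl_apply, if_pos rfl]
      exact one_ne_zero
  | inr x =>
      refine ⟨rowR m F f α 0, rowR_mem 0, ?_⟩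
      rw [rowR_zero_inr]
      exact one_ne_zero

lemma col_ne_aux (hcard : Fintype.card F = 2 ^ m)
    (hα : ∀ x : F, x ≠ 0 → ∃ k : ℕ, x = α ^ k) (hf0 : f 0 = 0)
    (a : Fin (m+2)) (x : F) :
    ∃ w ∈ extCode 2 m F f α, w (Sum.inl a) ≠ w (Sum.inr x) := by
  rcases eq_or_ne a 0 with rfl | ha
  · rcases eq_or_ne x 0 with rfl | hx
    · refine ⟨rowR m F f α 1, rowR_mem 1, ?_⟩
      rw [rowR_inl, rowR_one_inr, hf0, sgl_apply,
        if_neg (one_ne_zero' (m := m)).symm]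
      simp
    · obtain ⟨aa, haa⟩ := exists_tr hcard hα x hx
      refine ⟨trw m F f α aa, trw_mem aa, ?_⟩
      rw [trw_inl_zero, trw_inr]
      exact fun h => haa h.symm
  · refine ⟨rowR m F f α 0, rowR_mem 0, ?_⟩
    rw [rowR_inl, rowR_zero_inr, sgl_apply, if_neg ha]
    exact zero_ne_one

lemma col_ne (hcard : Fintype.card F = 2 ^ m)
    (hα : ∀ x : F, x ≠ 0 → ∃ k : ℕ, x = α ^ k) (hf0 : f 0 = 0)
    {i j : Fin (m+2) ⊕ F} (hij : i ≠ j) :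
    ∃ w ∈ extCode 2 m F f α, w i ≠ w j := by
  cases i with
  | inl a =>
      cases j with
      | inl b =>
          refine ⟨rowR m F f α a, rowR_mem a, ?_⟩
          have hab : b ≠ a := fun h => hij (by rw [h])
          rw [rowR_inl, rowR_inl, sgl_apply, sgl_apply, if_pos rfl, if_neg hab]
          exact one_ne_zero
      | inr x => exact col_ne_aux hcard hα hf0 a x
  | inr x =>
      cases j with
      | inl b =>
          obtain ⟨w, hw, hne⟩ := col_ne_aux hcard hα hf0 b x
          exact ⟨w, hw, hne.symm⟩
      | inr y =>
          have hxy : x - y ≠ 0 := sub_ne_zero.mpr (fun h => hij (by rw [h]))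
          obtain ⟨aa, haa⟩ := exists_tr hcard hα (x - y) hxy
          refine ⟨trw m F f α aa, trw_mem aa, ?_⟩
          rw [trw_inr, trw_inr]
          intro h
          apply haa
          rw [mul_sub, map_sub, h, sub_self]

end

end Statement16Aux

theorem statement16 (m s : ℕ) (hs : s ≤ m - 2) (hpar : Even (m + s)) (hms : 6 ≤ m + s)
    (F : Type) [Field F] [Fintype F] [Algebra (ZMod 2) F]
    (hcard : Fintype.card F = 2 ^ m)
    (α : F) (hα : ∀ x : F, x ≠ 0 → ∃ k : ℕ, x = α ^ k)
    (f : F → ZMod 2) (hf0 : f 0 = 0) (hpl : IsPlateaued2 m s F f) :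
    Fintype.card (Fin (m + 2) ⊕ F) = 2 ^ m + m + 2 ∧
    Module.finrank (ZMod 2) (dualCode (extCode 2 m F f α)) = 2 ^ m ∧
    hasMinDist (dualCode (extCode 2 m F f α) : Set (Fin (m + 2) ⊕ F → ZMod 2)) 3 := by
  classical
  open Statement16Aux in
  have hlen : Fintype.card (Fin (m + 2) ⊕ F) = 2 ^ m + m + 2 := by
    rw [Fintype.card_sum, Fintype.card_fin, hcard]; omega
  have h01 : (Sum.inl 0 : Fin (m+2) ⊕ F) ≠ Sum.inl 1 := by
    simp [Fin.ext_iff]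
  have h02 : (Sum.inl 0 : Fin (m+2) ⊕ F) ≠ Sum.inr (0 : F) := by simp
  have h12 : (Sum.inl 1 : Fin (m+2) ⊕ F) ≠ Sum.inr (0 : F) := by simp
  refine ⟨hlen, ?_, ?_, ?_⟩
  · -- dimension
    rw [Statement16Aux.dual_eq_ker]
    have h1 := LinearMap.finrank_range_add_finrank_ker (Statement16Aux.psiMap m F f α)
    rw [LinearMap.range_eq_top.mpr Statement16Aux.psi_surj, finrank_top,
      Module.finrank_fintype_fun_eq_card, Module.finrank_fintype_fun_eq_card,
      Fintype.card_fin, hlen] at h1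
    omega
  · -- existence of a weight-3 dual codeword
    set u0 : Fin (m+2) ⊕ F → ZMod 2 :=
      Pi.single (Sum.inl 0) 1 + Pi.single (Sum.inl 1) 1 + Pi.single (Sum.inr 0) 1 with hu0
    have hval : ∀ i, u0 i =
        (if i = Sum.inl 0 then 1 else 0) + (if i = Sum.inl 1 then 1 else 0) +
          (if i = Sum.inr 0 then (1 : ZMod 2) else 0) := by
      intro i
      simp [hu0, Pi.single_apply]
    refine ⟨u0, ?_, ?_, ?_⟩
    · -- membership in the dual
      rintro v ⟨c, a, aa, rfl⟩
      have hsingle : ∀ (j : Fin (m+2) ⊕ F) (v : Fin (m+2) ⊕ F → ZMod 2),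
          ∑ i : Fin (m+2) ⊕ F, (Pi.single j 1 : Fin (m+2) ⊕ F → ZMod 2) i * v i = v j := by
        intro j v
        simp only [Pi.single_apply, ite_mul, one_mul, zero_mul]
        rw [Finset.sum_ite_eq' Finset.univ j]
        simp
      simp only [hu0, Pi.add_apply, add_mul, Finset.sum_add_distrib, hsingle]
      have hone : (1 : Fin (m+2)) = Fin.succ 0 := by simp [Fin.ext_iff]
      simp only [Sum.elim_inl, Sum.elim_inr, hone, Fin.cons_succ, Fin.cons_zero,
        hf0, mul_zero, map_zero, add_zero, zero_add]
      revert a c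
      decide
    · -- u0 ≠ 0
      intro h
      have := congrFun h (Sum.inl 0)
      rw [hval (Sum.inl 0)] at this
      simp [h01, h02] at this
    · -- weight is 3
      have hsupp : Finset.univ.filter (fun i => u0 i ≠ 0)
          = {Sum.inl 0, Sum.inl 1, Sum.inr 0} := by
        ext i
        simp only [Finset.mem_filter, Finset.mem_univ, true_and, Finset.mem_insert,
          Finset.mem_singleton, hval i]
        by_cases hi0 : i = Sum.inl 0
        · simp [hi0, h01, h02]
        · by_cases hi1 : i = Sum.inl 1
          · simp [hi1, h01.symm, h12]
          · by_cases hi2 : i = Sum.inr 0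
            · simp [hi2, h02.symm, h12.symm]
            · simp [hi0, hi1, hi2]
      show (Finset.univ.filter (fun i => u0 i ≠ 0)).card = 3
      rw [hsupp, Finset.card_insert_of_notMem (by simp [h01, h02]),
        Finset.card_insert_of_notMem (by simp [h12]), Finset.card_singleton]
  · -- minimality
    intro v hv hvne
    by_contra hle
    set T := Finset.univ.filter (fun i => v i ≠ 0) with hT
    have hcard2 : T.card ≤ 2 := by
      have : ¬ 3 ≤ T.card := hle
      omega
    have hpos : 1 ≤ T.card := by
      obtain ⟨i, hi⟩ := Function.ne_iff.mp hvne
      exact Finset.Nonempty.card_pos ⟨i, Finset.mem_filter.mpr ⟨Finset.mem_univ i, by simpa using hi⟩⟩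
    have hsum : ∀ w ∈ extCode 2 m F f α, ∑ i ∈ T, w i = 0 := by
      intro w hw
      have h0 : ∑ i : Fin (m+2) ⊕ F, v i * w i = 0 := hv w hw
      have h1 : ∑ i ∈ T, v i * w i = ∑ i : Fin (m+2) ⊕ F, v i * w i :=
        Finset.sum_filter_of_ne (fun i _ h hv0 => h (by rw [hv0, zero_mul]))
      have h2 : ∑ i ∈ T, v i * w i = ∑ i ∈ T, w i := by
        refine Finset.sum_congr rfl (fun i hi => ?_)
        have hvi : v i ≠ 0 := (Finset.mem_filter.mp hi).2
        have h1 : v i = 1 := by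
          revert hvi
          generalize v i = t
          revert t
          decide
        rw [h1, one_mul]
      rw [← h2, h1, h0]
    rcases (by omega : T.card = 1 ∨ T.card = 2) with h1 | h2
    · obtain ⟨i, hi⟩ := Finset.card_eq_one.mp h1
      obtain ⟨w, hw, hwi⟩ := Statement16Aux.col_nonzero i
      have := hsum w hw
      rw [hi, Finset.sum_singleton] at this
      exact hwi this
    · obtain ⟨i, j, hij, hTij⟩ := Finset.card_eq_two.mp h2
      obtain ⟨w, hw, hne⟩ := Statement16Aux.col_ne hcard hα hf0 hij
      have := hsum w hw
      rw [hTij, Finset.sum_pair hij] at this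
      have hZ : ∀ a b : ZMod 2, a + b = 0 → a = b := by decide
      exact hne (hZ _ _ this)
end
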